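/- If D is a d×d self-adjoint matrix with zero diagonal and all off-diagonal entries of modulus c, then ‖D‖ ≥ c√(d-1). -/

import Mathlib

open Matrix

/-- If `D` is a `d × d` self-adjoint matrix with zero diagonal and all off-diagonal entries
of modulus `c`, then `‖D‖ ≥ c √(d-1)`. -/
theorem norm_lower_bound_constant_modulus
    {d : ℕ} (D : Matrix (Fin d) (Fin d) ℂ)
    (hD : D.IsHermitian) (hdiag : ∀ i, D i i = 0)
    (c : ℝ) (hc : 0 ≤ c) (hoff : ∀ i j, i ≠ j → ‖D i j‖ = c) :
    c * Real.sqrt ((d : ℝ) - 1) ≤ ‖Matrix.toEuclideanCLM (𝕜 := ℂ) D‖ := by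
  rcases Nat.eq_zero_or_pos d with h0 | hd
  · have : Real.sqrt ((d : ℝ) - 1) = 0 := by
      rw [Real.sqrt_eq_zero']
      rw [h0]; norm_num
    rw [this, mul_zero]
    exact norm_nonneg _
  · have i : Fin d := ⟨0, hd⟩
    have hle : ‖(Matrix.toEuclideanCLM (𝕜 := ℂ) D) (EuclideanSpace.single i 1)‖ ≤
        ‖Matrix.toEuclideanCLM (𝕜 := ℂ) D‖ := by
      have hx : ‖(EuclideanSpace.single i (1:ℂ) : EuclideanSpace ℂ (Fin d))‖ = 1 := by simp
      calc ‖(Matrix.toEuclideanCLM (𝕜 := ℂ) D) (EuclideanSpace.single i 1)‖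
          ≤ ‖Matrix.toEuclideanCLM (𝕜 := ℂ) D‖ * ‖(EuclideanSpace.single i (1:ℂ) : EuclideanSpace ℂ (Fin d))‖ :=
        (Matrix.toEuclideanCLM (𝕜 := ℂ) D).le_opNorm _
      _ = _ := by rw [hx, mul_one]
    refine le_trans ?_ hle
    have heq : (Matrix.toEuclideanCLM (𝕜 := ℂ) D) (EuclideanSpace.single i 1) =
        (WithLp.equiv 2 (Fin d → ℂ)).symm (D *ᵥ Pi.single i 1) :=
      Matrix.toEuclideanCLM_toLp D _
    rw [heq]
    have hnorm : ‖((WithLp.equiv 2 (Fin d → ℂ)).symm (D *ᵥ Pi.single i 1) : EuclideanSpace ℂ (Fin d))‖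
        = Real.sqrt (∑ j, ‖D j i‖^2) := by
      rw [EuclideanSpace.norm_eq]
      congr 1
      refine Finset.sum_congr rfl fun j _ => ?_
      simp [Matrix.mulVec_single_one]
    rw [hnorm]
    have hsum : ∑ j, ‖D j i‖^2 = ((d : ℝ) - 1) * c^2 := by
      calc ∑ j, ‖D j i‖^2
          = ∑ j ∈ Finset.univ.erase i, ‖D j i‖^2 :=
            (Finset.sum_erase _ (by simp [hdiag i])).symm
        _ = ∑ _j ∈ Finset.univ.erase i, c^2 :=
            Finset.sum_congr rfl fun j hj => by
              rw [hoff j i (Finset.ne_of_mem_erase hj)]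
        _ = ((d : ℝ) - 1) * c^2 := by
            rw [Finset.sum_const, Finset.card_erase_of_mem (Finset.mem_univ i), Finset.card_univ,
              Fintype.card_fin, nsmul_eq_mul, Nat.cast_sub hd, Nat.cast_one]
    rw [hsum, Real.sqrt_mul (by simp; exact_mod_cast hd) , Real.sqrt_sq hc, mul_comm]
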